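/- Let U be a connected open subset of {(u¹,u²,u³) ∈ ℝ³ : u¹,u²,u³ pairwise distinct} and let β : U → ℝ be a C¹ function satisfying ∂₁β + ∂₂β + ∂₃β = 0 and u¹∂₁β + u²∂₂β + u³∂₃β = −β on U. Then every point of U has an open neighborhood V ⊆ U on which β(u¹,u²,u³) = F((u³−u¹)/(u²−u¹))/(u²−u¹) for some C¹ function F of one real variable; conversely, every function of this form on such a domain satisfies both equations. -/

import Mathlib

/-- Partial derivative of `g : ℝ³ → ℝ` with respect to the `i`-th coordinate. -/
noncomputable def pd3 (g : (Fin 3 → ℝ) → ℝ) (i : Fin 3) (u : Fin 3 → ℝ) : ℝ :=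
  deriv (fun t => g (Function.update u i t)) (u i)



section AuxHelpers
open Function Set

lemma update_eq_add_smul (u : Fin 3 → ℝ) (i : Fin 3) (t : ℝ) :
    Function.update u i t = u + (t - u i) • (Pi.single i 1 : Fin 3 → ℝ) := by
  funext j
  rcases eq_or_ne j i with h | h
  · subst h; simp
  · simp [Function.update_of_ne h, Pi.single_eq_of_ne h]

lemma pd3_eq_fderiv {β : (Fin 3 → ℝ) → ℝ} {u : Fin 3 → ℝ}
    (hd : DifferentiableAt ℝ β u) (i : Fin 3) :
    pd3 β i u = fderiv ℝ β u (Pi.single i 1 : Fin 3 → ℝ) := by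
  have h1 : HasDerivAt (fun t : ℝ => u + (t - u i) • (Pi.single i 1 : Fin 3 → ℝ)) (Pi.single i 1 : Fin 3 → ℝ) (u i) := by
    have : HasDerivAt (fun t : ℝ => t - u i) 1 (u i) := (hasDerivAt_id _).sub_const _
    simpa using (this.smul_const ((Pi.single i 1 : Fin 3 → ℝ))).const_add u
  have h2 : HasDerivAt (fun t => β (Function.update u i t)) (fderiv ℝ β u (Pi.single i 1 : Fin 3 → ℝ)) (u i) := by
    have hu : u = u + (u i - u i) • (Pi.single i 1 : Fin 3 → ℝ) := by simp
    have hfd : HasFDerivAt β (fderiv ℝ β u) (u + (u i - u i) • (Pi.single i 1 : Fin 3 → ℝ)) := by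
      rw [← hu]; exact hd.hasFDerivAt
    have h3 := HasFDerivAt.comp_hasDerivAt (u i) hfd h1
    refine HasDerivAt.congr_of_eventuallyEq h3 (Filter.Eventually.of_forall fun t => ?_)
    simp only [Function.comp_apply, update_eq_add_smul]
  exact h2.deriv

lemma hasDerivAt_line {β : (Fin 3 → ℝ) → ℝ} {a w : Fin 3 → ℝ} {t : ℝ}
    (hd : DifferentiableAt ℝ β (a + t • w)) :
    HasDerivAt (fun s : ℝ => β (a + s • w)) (fderiv ℝ β (a + t • w) w) t := by
  have h1 : HasDerivAt (fun s : ℝ => a + s • w) w t := by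
    simpa using ((hasDerivAt_id t).smul_const w).const_add a
  exact hd.hasFDerivAt.comp_hasDerivAt t h1

lemma fderiv_eq_sum {β : (Fin 3 → ℝ) → ℝ} {u : Fin 3 → ℝ}
    (hd : DifferentiableAt ℝ β u) (w : Fin 3 → ℝ) :
    fderiv ℝ β u w = w 0 * pd3 β 0 u + w 1 * pd3 β 1 u + w 2 * pd3 β 2 u := by
  have hw : w = w 0 • (Pi.single 0 1 : Fin 3 → ℝ) + w 1 • (Pi.single 1 1 : Fin 3 → ℝ) + w 2 • (Pi.single 2 1 : Fin 3 → ℝ) := by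
    funext j; fin_cases j <;> simp [Pi.single_apply]
  rw [pd3_eq_fderiv hd 0, pd3_eq_fderiv hd 1, pd3_eq_fderiv hd 2]
  conv_lhs => rw [hw]
  simp [mul_comm]

lemma const_of_uIcc {f : ℝ → ℝ} {a b : ℝ}
    (h : ∀ x ∈ Set.uIcc a b, HasDerivAt f 0 x) : f b = f a := by
  wlog hab : a ≤ b generalizing a b
  · exact (this (fun x hx => h x (by rwa [uIcc_comm])) (le_of_not_ge hab)).symm
  have hc : ContinuousOn f (Icc a b) := fun x hx =>
    ((h x (by rwa [uIcc_of_le hab])).continuousAt).continuousWithinAt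
  have := constant_of_has_deriv_right_zero hc (fun x hx =>
    ((h x (by rw [uIcc_of_le hab]; exact Ico_subset_Icc_self hx)).hasDerivWithinAt))
  exact this b (right_mem_Icc.2 hab)


lemma part2_aux {F : ℝ → ℝ} (hF : ContDiff ℝ 1 F) (u : Fin 3 → ℝ) (hne : u 1 - u 0 ≠ 0) :
    (pd3 (fun v => F ((v 2 - v 0) / (v 1 - v 0)) / (v 1 - v 0)) 0 u
      + pd3 (fun v => F ((v 2 - v 0) / (v 1 - v 0)) / (v 1 - v 0)) 1 u
      + pd3 (fun v => F ((v 2 - v 0) / (v 1 - v 0)) / (v 1 - v 0)) 2 u = 0) ∧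
    (u 0 * pd3 (fun v => F ((v 2 - v 0) / (v 1 - v 0)) / (v 1 - v 0)) 0 u
      + u 1 * pd3 (fun v => F ((v 2 - v 0) / (v 1 - v 0)) / (v 1 - v 0)) 1 u
      + u 2 * pd3 (fun v => F ((v 2 - v 0) / (v 1 - v 0)) / (v 1 - v 0)) 2 u
      = -(F ((u 2 - u 0) / (u 1 - u 0)) / (u 1 - u 0))) := by
  set a := u 0 with ha
  set b := u 1 with hb
  set c := u 2 with hc
  set x : ℝ := (c - a) / (b - a) with hx
  have hFx : HasDerivAt F (deriv F x) x :=
    ((hF.differentiable one_ne_zero) x).hasDerivAt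
  have h10 : (1 : Fin 3) ≠ 0 := by decide
  have h20 : (2 : Fin 3) ≠ 0 := by decide
  have h21 : (2 : Fin 3) ≠ 1 := by decide
  have h01 : (0 : Fin 3) ≠ 1 := by decide
  have h02 : (0 : Fin 3) ≠ 2 := by decide
  have h12 : (1 : Fin 3) ≠ 2 := by decide
  -- pd3 at index 0
  have e0 : pd3 (fun v => F ((v 2 - v 0) / (v 1 - v 0)) / (v 1 - v 0)) 0 u
      = ((deriv F x * (((-1) * (b - a) - (c - a) * (-1)) / (b - a) ^ 2)) * (b - a)
          - F x * (-1)) / (b - a) ^ 2 := by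
    have hfun : (fun t => (fun v : Fin 3 → ℝ => F ((v 2 - v 0) / (v 1 - v 0)) / (v 1 - v 0))
        (Function.update u 0 t)) = fun t => F ((c - t) / (b - t)) / (b - t) := by
      funext t
      simp [Function.update_apply, h10, h20]; rfl
    have hd : HasDerivAt (fun t => b - t) (-1) a := by
      simpa using (hasDerivAt_id a).const_sub b
    have hn : HasDerivAt (fun t => c - t) (-1) a := by
      simpa using (hasDerivAt_id a).const_sub c
    have hinner : HasDerivAt (fun t => (c - t) / (b - t))
        (((-1) * (b - a) - (c - a) * (-1)) / (b - a) ^ 2) a := hn.div hd hne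
    have hcomp : HasDerivAt (fun t => F ((c - t) / (b - t)))
        (deriv F x * (((-1) * (b - a) - (c - a) * (-1)) / (b - a) ^ 2)) a :=
      HasDerivAt.comp a hFx hinner
    have hout := hcomp.div hd hne
    rw [pd3, hfun]
    exact hout.deriv
  -- pd3 at index 1
  have e1 : pd3 (fun v => F ((v 2 - v 0) / (v 1 - v 0)) / (v 1 - v 0)) 1 u
      = ((deriv F x * ((0 * (b - a) - (c - a) * 1) / (b - a) ^ 2)) * (b - a)
          - F x * 1) / (b - a) ^ 2 := by
    have hfun : (fun t => (fun v : Fin 3 → ℝ => F ((v 2 - v 0) / (v 1 - v 0)) / (v 1 - v 0))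
        (Function.update u 1 t)) = fun t => F ((c - a) / (t - a)) / (t - a) := by
      funext t
      simp [Function.update_apply, h01, h21]; rfl
    have hd : HasDerivAt (fun t : ℝ => t - a) 1 b := (hasDerivAt_id b).sub_const a
    have hinner : HasDerivAt (fun t => (c - a) / (t - a))
        ((0 * (b - a) - (c - a) * 1) / (b - a) ^ 2) b :=
      (hasDerivAt_const b (c - a)).div hd hne
    have hcomp : HasDerivAt (fun t => F ((c - a) / (t - a)))
        (deriv F x * ((0 * (b - a) - (c - a) * 1) / (b - a) ^ 2)) b :=
      HasDerivAt.comp b hFx hinner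
    have hout := hcomp.div hd hne
    rw [pd3, hfun]
    exact hout.deriv
  -- pd3 at index 2
  have e2 : pd3 (fun v => F ((v 2 - v 0) / (v 1 - v 0)) / (v 1 - v 0)) 2 u
      = (deriv F x * (1 / (b - a))) / (b - a) := by
    have hfun : (fun t => (fun v : Fin 3 → ℝ => F ((v 2 - v 0) / (v 1 - v 0)) / (v 1 - v 0))
        (Function.update u 2 t)) = fun t => F ((t - a) / (b - a)) / (b - a) := by
      funext t
      simp [Function.update_apply, h02, h12]; rfl
    have hinner : HasDerivAt (fun t : ℝ => (t - a) / (b - a)) (1 / (b - a)) c :=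
      ((hasDerivAt_id c).sub_const a).div_const (b - a)
    have hcomp : HasDerivAt (fun t => F ((t - a) / (b - a)))
        (deriv F x * (1 / (b - a))) c := HasDerivAt.comp c hFx hinner
    have hout := hcomp.div_const (b - a)
    rw [pd3, hfun]
    exact hout.deriv
  rw [e0, e1, e2]
  constructor
  · field_simp
    ring
  · field_simp
    ring

lemma part1_aux (U : Set (Fin 3 → ℝ)) (β : (Fin 3 → ℝ) → ℝ)
    (hU : IsOpen U)
    (hdist : ∀ u ∈ U, u 0 ≠ u 1 ∧ u 0 ≠ u 2 ∧ u 1 ≠ u 2)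
    (hC : ContDiffOn ℝ 1 β U)
    (he : ∀ u ∈ U, pd3 β 0 u + pd3 β 1 u + pd3 β 2 u = 0)
    (hE : ∀ u ∈ U, u 0 * pd3 β 0 u + u 1 * pd3 β 1 u + u 2 * pd3 β 2 u = -β u)
    (p : Fin 3 → ℝ) (hp : p ∈ U) :
    ∃ V : Set (Fin 3 → ℝ), IsOpen V ∧ p ∈ V ∧ V ⊆ U ∧
      ∃ F : ℝ → ℝ, ContDiff ℝ 1 F ∧
        ∀ u ∈ V, β u = F ((u 2 - u 0) / (u 1 - u 0)) / (u 1 - u 0) := by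
  have hdiff : ∀ u ∈ U, DifferentiableAt ℝ β u := fun u hu =>
    ((hC.differentiableOn one_ne_zero) u hu).differentiableAt (hU.mem_nhds hu)
  set s0 : ℝ := p 1 - p 0 with hs0def
  have hs0 : s0 ≠ 0 := sub_ne_zero.2 ((hdist p hp).1.symm)
  set x0 : ℝ := (p 2 - p 0) / (p 1 - p 0) with hx0def
  set wv : ℝ → (Fin 3 → ℝ) := fun x => ![0, 1, x] with hwvdef
  set c0 : Fin 3 → ℝ := fun _ => p 0 with hc0def
  set qt : ℝ → (Fin 3 → ℝ) := fun x => c0 + s0 • wv x with hqtdef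
  have hwv0 : ∀ x : ℝ, wv x 0 = 0 := fun x => rfl
  have hwv1 : ∀ x : ℝ, wv x 1 = 1 := fun x => rfl
  have hwv2 : ∀ x : ℝ, wv x 2 = x := fun x => rfl
  have hqt_apply : ∀ (x : ℝ) (j : Fin 3), qt x j = p 0 + s0 * wv x j := fun x j => rfl
  have hqtx0 : qt x0 = p := by
    funext j
    rw [hqt_apply]
    fin_cases j
    · show p 0 + s0 * wv x0 0 = p 0
      rw [hwv0]; ring
    · show p 0 + s0 * wv x0 1 = p 1
      rw [hwv1, hs0def]; ring
    · show p 0 + s0 * wv x0 2 = p 2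
      rw [hwv2, hx0def, hs0def]
      field_simp
      rw [mul_div_cancel_left₀ _ (sub_ne_zero.2 (hdist p hp).1.symm)]; ring
  have hwvC : ContDiff ℝ 1 wv := by
    apply contDiff_pi.2
    intro j
    fin_cases j
    · show ContDiff ℝ 1 fun x : ℝ => wv x 0
      simp only [hwv0]; exact contDiff_const
    · show ContDiff ℝ 1 fun x : ℝ => wv x 1
      simp only [hwv1]; exact contDiff_const
    · show ContDiff ℝ 1 fun x : ℝ => wv x 2
      simp only [hwv2]; exact contDiff_id
  have hqtC : ContDiff ℝ 1 qt := contDiff_const.add (contDiff_const.smul (f := fun _ => s0) hwvC)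
  -- the open set of good parameters
  set W : Set ℝ := qt ⁻¹' U with hWdef
  have hWopen : IsOpen W := hU.preimage hqtC.continuous
  have hx0W : x0 ∈ W := by
    simp only [hWdef, Set.mem_preimage, hqtx0]; exact hp
  obtain ⟨δ', hδ'0, hδ'W⟩ := Metric.isOpen_iff.1 hWopen x0 hx0W
  set δ : ℝ := δ' / 3 with hδdef
  have hδ0 : (0:ℝ) < δ := by positivity
  have hball3 : Metric.ball x0 (3 * δ) ⊆ W := by
    rw [show 3 * δ = δ' by rw [hδdef]; ring]; exact hδ'W
  set bump : ContDiffBump x0 := ⟨δ, 2 * δ, hδ0, by linarith⟩ with hbumpdef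
  set F : ℝ → ℝ := fun x => bump x * (s0 * β (qt x)) with hFdef
  have hFC : ContDiff ℝ 1 F := by
    rw [contDiff_iff_contDiffAt]
    intro x
    by_cases hx : x ∈ Metric.ball x0 (3 * δ)
    · have h1 : ContDiffAt ℝ 1 (fun y => s0 * β (qt y)) x :=
        contDiffAt_const.mul ((hC.contDiffAt (hU.mem_nhds (hball3 hx))).comp x hqtC.contDiffAt)
      exact (bump.contDiff.contDiffAt).mul h1
    · have hopen : IsOpen (Metric.closedBall x0 (2 * δ))ᶜ := Metric.isClosed_closedBall.isOpen_compl
      have hxmem : x ∈ (Metric.closedBall x0 (2 * δ))ᶜ := by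
        simp only [Set.mem_compl_iff, Metric.mem_closedBall, not_le]
        have := hx
        simp only [Metric.mem_ball, not_lt] at this
        linarith
      have hev : F =ᶠ[nhds x] (fun _ => (0:ℝ)) := by
        filter_upwards [hopen.mem_nhds hxmem] with y hy
        have : bump y = 0 := by
          apply bump.zero_of_le_dist
          simp only [Set.mem_compl_iff, Metric.mem_closedBall, not_le] at hy
          exact le_of_lt hy
        simp [hFdef, this]
      exact contDiffAt_const.congr_of_eventuallyEq hev
  have hFeq : ∀ x ∈ Metric.ball x0 δ, F x = s0 * β (qt x) := by
    intro x hx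
    have : bump x = 1 := bump.one_of_mem_closedBall (Metric.ball_subset_closedBall hx)
    simp [hFdef, this]
  -- radius around p
  obtain ⟨r, hr0, hrU⟩ := Metric.isOpen_iff.1 hU p hp
  set vfun : (Fin 3 → ℝ) → (Fin 3 → ℝ) := fun u j => u j + (p 0 - u 0) with hvfdef
  have hvfC : Continuous vfun := by
    apply continuous_pi; intro j
    exact (continuous_apply j).add (continuous_const.sub (continuous_apply 0))
  set xfun : (Fin 3 → ℝ) → ℝ := fun u => (u 2 - u 0) / (u 1 - u 0) with hxfdef
  set A : Set (Fin 3 → ℝ) := {u | u 1 ≠ u 0} with hAdef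
  have hAopen : IsOpen A := isOpen_ne_fun (continuous_apply 1) (continuous_apply 0)
  have hxfC : ContinuousOn xfun A := ContinuousOn.div
    (((continuous_apply 2).sub (continuous_apply 0)).continuousOn)
    (((continuous_apply 1).sub (continuous_apply 0)).continuousOn)
    (fun u hu => sub_ne_zero.2 hu)
  set V : Set (Fin 3 → ℝ) :=
    (A ∩ (fun u => (xfun u, qt (xfun u))) ⁻¹' ((Metric.ball x0 δ) ×ˢ (Metric.ball p r)))
      ∩ (Metric.ball p r ∩ vfun ⁻¹' (Metric.ball p r)) with hVdef
  have hVopen : IsOpen V := by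
    apply IsOpen.inter
    · exact ContinuousOn.isOpen_inter_preimage
        (hxfC.prodMk (hqtC.continuous.comp_continuousOn hxfC)) hAopen
        (Metric.isOpen_ball.prod Metric.isOpen_ball)
    · exact Metric.isOpen_ball.inter (Metric.isOpen_ball.preimage hvfC)
  have hxfp : xfun p = x0 := rfl
  have hvfp : vfun p = p := by
    funext j; show p j + (p 0 - p 0) = p j; ring
  have hpV : p ∈ V := by
    refine ⟨⟨(hdist p hp).1.symm, ?_⟩, Metric.mem_ball_self hr0, ?_⟩
    · simp only [Set.mem_preimage, Set.mem_prod, hxfp, hqtx0]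
      exact ⟨Metric.mem_ball_self hδ0, Metric.mem_ball_self hr0⟩
    · simp only [Set.mem_preimage, hvfp]
      exact Metric.mem_ball_self hr0
  have hVU : V ⊆ U := fun u hu => hrU hu.2.1
  refine ⟨V, hVopen, hpV, hVU, F, hFC, ?_⟩
  intro u hu
  obtain ⟨⟨hA1, hpair⟩, hub, hvb0⟩ := hu
  simp only [Set.mem_preimage, Set.mem_prod] at hpair hvb0
  have hA1' : u 1 ≠ u 0 := hA1
  have hvb : vfun u ∈ Metric.ball p r := hvb0
  set s : ℝ := u 1 - u 0 with hsdef
  have hs : s ≠ 0 := sub_ne_zero.2 hA1'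
  set x : ℝ := xfun u with hxdef
  have hxb : x ∈ Metric.ball x0 δ := hpair.1
  have hqb : qt x ∈ Metric.ball p r := hpair.2
  set d : Fin 3 → ℝ := fun _ => p 0 - u 0 with hddef
  -- Step A : translation invariance along the segment from u to vfun u
  have hsegA : ∀ t ∈ Set.uIcc (0:ℝ) 1, u + t • d ∈ Metric.ball p r := by
    intro t ht
    rw [Set.uIcc_of_le zero_le_one] at ht
    have heq : u + t • d = (1 - t) • u + t • vfun u := by
      funext j
      show u j + t * (p 0 - u 0) = (1 - t) * u j + t * (u j + (p 0 - u 0))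
      ring
    rw [heq]
    exact (convex_ball p r) hub hvb (by linarith [ht.2]) ht.1 (by ring)
  have hderivA : ∀ t ∈ Set.uIcc (0:ℝ) 1, HasDerivAt (fun t => β (u + t • d)) 0 t := by
    intro t ht
    have hmem : u + t • d ∈ U := hrU (hsegA t ht)
    have h1 := hasDerivAt_line (β := β) (a := u) (w := d) (t := t) (hdiff _ hmem)
    have h2 : fderiv ℝ β (u + t • d) d = 0 := by
      rw [fderiv_eq_sum (hdiff _ hmem) d]
      have h3 := he _ hmem
      show (p 0 - u 0) * _ + (p 0 - u 0) * _ + (p 0 - u 0) * _ = 0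
      linear_combination (p 0 - u 0) * h3
    rw [h2] at h1
    exact h1
  have hstepA : β (vfun u) = β u := by
    have hAc := const_of_uIcc hderivA
    have h10 : u + (1:ℝ) • d = vfun u := by
      funext j
      show u j + 1 * (p 0 - u 0) = u j + (p 0 - u 0)
      ring
    have h00 : u + (0:ℝ) • d = u := by
      funext j
      show u j + 0 * (p 0 - u 0) = u j
      ring
    simpa only [h10, h00] using hAc
  -- Step B : homogeneity along the ray through (p 0, p 0, p 0)
  set γ : ℝ → (Fin 3 → ℝ) := fun l => c0 + l • wv x with hγdef
  have hγ_apply : ∀ (l : ℝ) (j : Fin 3), γ l j = p 0 + l * wv x j := fun l j => rfl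
  have hsx : s * x = u 2 - u 0 := by
    rw [hxdef, hsdef]
    simp only [hxfdef]
    rw [mul_comm, div_mul_cancel₀ _ (sub_ne_zero.2 hA1')]
  have hγs : γ s = vfun u := by
    funext j
    rw [hγ_apply]
    fin_cases j
    · show p 0 + s * wv x 0 = vfun u 0
      rw [hwv0]
      show p 0 + s * 0 = u 0 + (p 0 - u 0)
      ring
    · show p 0 + s * wv x 1 = vfun u 1
      rw [hwv1]
      show p 0 + s * 1 = u 1 + (p 0 - u 0)
      rw [hsdef]; ring
    · show p 0 + s * wv x 2 = vfun u 2
      rw [hwv2]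
      show p 0 + s * x = u 2 + (p 0 - u 0)
      rw [hsx]; ring
  have hγs0 : γ s0 = qt x := rfl
  have hsegB : ∀ l ∈ Set.uIcc s s0, γ l ∈ Metric.ball p r := by
    intro l hl
    rw [← segment_eq_uIcc] at hl
    obtain ⟨a1, b1, ha1, hb1, hab, hlab⟩ := hl
    simp only [smul_eq_mul] at hlab
    have heq : γ l = a1 • γ s + b1 • γ s0 := by
      funext j
      show p 0 + l * wv x j = a1 * (p 0 + s * wv x j) + b1 * (p 0 + s0 * wv x j)
      linear_combination (wv x j) * hlab.symm - p 0 * hab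
    rw [heq]
    exact (convex_ball p r) (hγs ▸ hvb) (hγs0 ▸ hqb) ha1 hb1 hab
  have hderivB : ∀ l ∈ Set.uIcc s s0, HasDerivAt (fun l => l * β (γ l)) 0 l := by
    intro l hl
    have hmem : γ l ∈ U := hrU (hsegB l hl)
    have hline : HasDerivAt (fun t : ℝ => β (γ t)) (fderiv ℝ β (γ l) (wv x)) l :=
      hasDerivAt_line (hdiff _ hmem)
    have hprod : HasDerivAt (fun t => t * β (γ t))
        ((1:ℝ) * β (γ l) + l * fderiv ℝ β (γ l) (wv x)) l := (hasDerivAt_id l).mul hline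
    have hval : (1:ℝ) * β (γ l) + l * fderiv ℝ β (γ l) (wv x) = 0 := by
      have hfd : fderiv ℝ β (γ l) (wv x)
          = pd3 β 1 (γ l) + x * pd3 β 2 (γ l) := by
        rw [fderiv_eq_sum (hdiff _ hmem)]
        rw [hwv0, hwv1, hwv2]; ring
      have h3 := he _ hmem
      have h4 := hE _ hmem
      rw [hγ_apply, hγ_apply, hγ_apply, hwv0, hwv1, hwv2] at h4
      rw [hfd]
      linear_combination h4 - p 0 * h3
    rw [hval] at hprod
    exact hprod
  have hB := const_of_uIcc hderivB
  -- Conclusion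
  have hgoal : F x = s * β u :=
    calc F x = s0 * β (qt x) := hFeq x hxb
      _ = s0 * β (γ s0) := by rw [hγs0]
      _ = s * β (γ s) := hB
      _ = s * β (vfun u) := by rw [hγs]
      _ = s * β u := by rw [hstepA]
  have hxeq : (u 2 - u 0) / s = x := by
    rw [hxdef, hsdef]
  rw [hxeq, eq_div_iff hs, hgoal]
  ring

end AuxHelpers

/-- A C¹ function `β` on a connected open set of points with pairwise
distinct coordinates satisfying `e(β) = 0` and `E(β) = -β` is locally of the form
`β = F((u³-u¹)/(u²-u¹))/(u²-u¹)` for a C¹ function `F`; conversely every function of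
this form satisfies both equations. -/
theorem stmt_0 :
    (∀ (U : Set (Fin 3 → ℝ)) (β : (Fin 3 → ℝ) → ℝ),
      IsOpen U → IsConnected U →
      (∀ u ∈ U, u 0 ≠ u 1 ∧ u 0 ≠ u 2 ∧ u 1 ≠ u 2) →
      ContDiffOn ℝ 1 β U →
      (∀ u ∈ U, pd3 β 0 u + pd3 β 1 u + pd3 β 2 u = 0) →
      (∀ u ∈ U, u 0 * pd3 β 0 u + u 1 * pd3 β 1 u + u 2 * pd3 β 2 u = -β u) →
      ∀ p ∈ U, ∃ V : Set (Fin 3 → ℝ), IsOpen V ∧ p ∈ V ∧ V ⊆ U ∧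
        ∃ F : ℝ → ℝ, ContDiff ℝ 1 F ∧
          ∀ u ∈ V, β u = F ((u 2 - u 0) / (u 1 - u 0)) / (u 1 - u 0))
    ∧
    (∀ (U : Set (Fin 3 → ℝ)) (F : ℝ → ℝ),
      IsOpen U → IsConnected U →
      (∀ u ∈ U, u 0 ≠ u 1 ∧ u 0 ≠ u 2 ∧ u 1 ≠ u 2) →
      ContDiff ℝ 1 F →
      ∀ u ∈ U,
        (pd3 (fun v => F ((v 2 - v 0) / (v 1 - v 0)) / (v 1 - v 0)) 0 u
          + pd3 (fun v => F ((v 2 - v 0) / (v 1 - v 0)) / (v 1 - v 0)) 1 u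
          + pd3 (fun v => F ((v 2 - v 0) / (v 1 - v 0)) / (v 1 - v 0)) 2 u = 0) ∧
        (u 0 * pd3 (fun v => F ((v 2 - v 0) / (v 1 - v 0)) / (v 1 - v 0)) 0 u
          + u 1 * pd3 (fun v => F ((v 2 - v 0) / (v 1 - v 0)) / (v 1 - v 0)) 1 u
          + u 2 * pd3 (fun v => F ((v 2 - v 0) / (v 1 - v 0)) / (v 1 - v 0)) 2 u
          = -(F ((u 2 - u 0) / (u 1 - u 0)) / (u 1 - u 0)))) := by
  constructor
  · intro U β hU _hconn hdist hC he hE p hp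
    exact part1_aux U β hU hdist hC he hE p hp
  · intro U F hU _hconn hdist hF u hu
    exact part2_aux hF u (sub_ne_zero.2 (hdist u hu).1.symm)
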